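/- Let r > 0 and define S by S_0 = 1 and S_{k+1} = (1 + (2+r)S_k + sqrt((1+(2+r)S_k)² − 4S_k²))/2. Then for every k ≥ 0, (∑_{i=0}^{k} S_i)/S_k ≤ (1 + sqrt(1 + 4/r))/2 ≤ 1 + sqrt(1/r). -/

import Mathlib

theorem stmt_11 (r : ℝ) (hr : 0 < r) (S : ℕ → ℝ) (hS0 : S 0 = 1)
    (hSrec : ∀ k : ℕ, S (k+1) =
      (1 + (2 + r) * S k + Real.sqrt ((1 + (2 + r) * S k) ^ 2 - 4 * (S k) ^ 2)) / 2) :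
    ∀ k : ℕ,
      (∑ i ∈ Finset.range (k+1), S i) / S k ≤ (1 + Real.sqrt (1 + 4 / r)) / 2 ∧
      (1 + Real.sqrt (1 + 4 / r)) / 2 ≤ 1 + Real.sqrt (1 / r) := by
  have h4r : (0:ℝ) ≤ 1 + 4 / r := by positivity
  set s := Real.sqrt (1 + 4 / r) with hsdef
  have hs0 : 0 ≤ s := Real.sqrt_nonneg _
  have hs2 : s ^ 2 = 1 + 4 / r := Real.sq_sqrt h4r
  have h4rpos : (0:ℝ) < 4 / r := by positivity
  have hs1 : 1 < s := by nlinarith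
  set c := (1 + s) / 2 with hcdef
  have hc1 : 1 < c := by rw [hcdef]; linarith
  have hcc : r * (c * (c - 1)) = 1 := by
    have : c * (c - 1) = (s ^ 2 - 1) / 4 := by rw [hcdef]; ring
    rw [this, hs2]
    field_simp
    ring
  -- sqrt(r^2 + 4r) = r * s
  have hrs : Real.sqrt (r ^ 2 + 4 * r) = r * s := by
    have h1 : r ^ 2 + 4 * r = (r * s) ^ 2 := by
      have : (r * s) ^ 2 = r ^ 2 * (1 + 4 / r) := by rw [mul_pow, hs2]
      rw [this]; field_simp
    rw [h1, Real.sqrt_sq (by positivity)]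
  -- second inequality
  have hsecond : c ≤ 1 + Real.sqrt (1 / r) := by
    have hq : 0 ≤ 1 / r := by positivity
    have hq2 : (Real.sqrt (1 / r)) ^ 2 = 1 / r := Real.sq_sqrt hq
    have hq0 : 0 ≤ Real.sqrt (1 / r) := Real.sqrt_nonneg _
    have hle : s ≤ 1 + 2 * Real.sqrt (1 / r) := by
      have h2 : 1 + 4 / r ≤ (1 + 2 * Real.sqrt (1 / r)) ^ 2 := by
        have he : (1 + 2 * Real.sqrt (1 / r)) ^ 2
            = 1 + 4 * Real.sqrt (1 / r) + 4 * (Real.sqrt (1 / r)) ^ 2 := by ring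
        have h4q : 4 * (Real.sqrt (1 / r)) ^ 2 = 4 / r := by rw [hq2]; ring
        rw [he]; linarith
      calc s ≤ Real.sqrt ((1 + 2 * Real.sqrt (1 / r)) ^ 2) := Real.sqrt_le_sqrt h2
        _ = 1 + 2 * Real.sqrt (1 / r) := Real.sqrt_sq (by positivity)
    rw [hcdef]; linarith
  have key : ∀ k, 1 ≤ S k ∧ (∑ i ∈ Finset.range (k+1), S i) ≤ c * S k := by
    intro k
    induction k with
    | zero =>
      constructor
      · rw [hS0]
      · simp [hS0]; linarith
    | succ k ih =>
      obtain ⟨h1, h2⟩ := ih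
      have hSk0 : 0 < S k := by linarith
      -- lower bound on S (k+1)
      have hDle : (r ^ 2 + 4 * r) * (S k) ^ 2 ≤ (1 + (2 + r) * S k) ^ 2 - 4 * (S k) ^ 2 := by
        nlinarith
      have hsq : r * s * S k ≤ Real.sqrt ((1 + (2 + r) * S k) ^ 2 - 4 * (S k) ^ 2) := by
        have h3 : Real.sqrt ((r ^ 2 + 4 * r) * (S k) ^ 2) = r * s * S k := by
          rw [Real.sqrt_mul (by positivity), Real.sqrt_sq hSk0.le, hrs]
        calc r * s * S k = Real.sqrt ((r ^ 2 + 4 * r) * (S k) ^ 2) := h3.symm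
          _ ≤ _ := Real.sqrt_le_sqrt hDle
      have hstep : (1 + r * c) * S k ≤ S (k+1) := by
        rw [hSrec k]
        have : 1 + r * c = (2 + r + r * s) / 2 := by rw [hcdef]; ring
        rw [this]
        nlinarith
      have hrc0 : 0 < r * c := by positivity
      have hSk1 : 1 ≤ S (k+1) := by nlinarith
      refine ⟨hSk1, ?_⟩
      rw [Finset.sum_range_succ]
      -- c * S k ≤ (c - 1) * S (k+1)
      have hkey : c * S k ≤ (c - 1) * S (k+1) := by
        have hfac : (c - 1) * (1 + r * c) = c := by linear_combination hcc
        have h4 : (c - 1) * ((1 + r * c) * S k) = c * S k := by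
          rw [← mul_assoc, hfac]
        have h5 : (c - 1) * ((1 + r * c) * S k) ≤ (c - 1) * S (k+1) :=
          mul_le_mul_of_nonneg_left hstep (by linarith)
        linarith
      linarith
  intro k
  obtain ⟨h1, h2⟩ := key k
  constructor
  · rw [div_le_iff₀ (by linarith : (0:ℝ) < S k)]
    calc (∑ i ∈ Finset.range (k+1), S i) ≤ c * S k := h2
      _ = (1 + s) / 2 * S k := by rw [hcdef]
  · exact hsecond
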